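/- Let S be a Hausdorff countably compact topological semigroup. Then each maximal subgroup H(e), e ∈ E(S), is sequentially closed in S: no sequence of elements of H(e) converges to a point outside H(e). -/

import Mathlib

open Filter Topology

variable {S : Type*}

/-- `spow x n` is `x ^ n` for `n ≥ 1` in a semigroup (with junk value `x` at `0`). -/
def spow {S : Type*} [Mul S] (x : S) : ℕ → S
  | 0 => x
  | 1 => x
  | n + 2 => spow x (n + 1) * x

/-- An element of a topological semigroup is topologically periodic if every open
neighbourhood of `x` contains `x ^ n` for some `n ≥ 2`. -/
def TopPeriodic {S : Type*} [Mul S] [TopologicalSpace S] (x : S) : Prop :=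
  ∀ U : Set S, IsOpen U → x ∈ U → ∃ n : ℕ, 2 ≤ n ∧ spow x n ∈ U

/-- The Clifford part `H(S)` of a semigroup: the union of all maximal subgroups. -/
def HSet (S : Type*) [Mul S] : Set S :=
  {x | ∃ y, x * y = y * x ∧ x * y * x = x ∧ y * x * y = y}

/-- The maximal subgroup `H(e)` of a semigroup with identity the idempotent `e`. -/
def Hgrp (S : Type*) [Mul S] (e : S) : Set S :=
  {x | ∃ y, x * y = e ∧ y * x = e ∧ x * e = x ∧ e * x = x ∧ y * e = y ∧ e * y = y}

/-- `inv` is the inversion map on the Clifford part `H(S)`: it sends each element of a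
maximal subgroup to its (unique) commuting inverse. -/
def IsInvMap (S : Type*) [Mul S] (inv : S → S) : Prop :=
  ∀ x ∈ HSet S, x * inv x = inv x * x ∧ x * inv x * x = x ∧ inv x * x * inv x = inv x

/-- A topological space is countably compact if every countable open cover admits a
finite subcover. -/
def CountablyCompactSpace' (X : Type*) [TopologicalSpace X] : Prop :=
  ∀ U : ℕ → Set X, (∀ n, IsOpen (U n)) → (⋃ n, U n) = Set.univ →
    ∃ F : Finset ℕ, (⋃ n ∈ F, U n) = Set.univ

/-- A subset of a topological space is countably compact (as a subspace) if every
countable cover by open sets of the ambient space admits a finite subcover. -/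
def CountablyCompactIn {X : Type*} [TopologicalSpace X] (A : Set X) : Prop :=
  ∀ U : ℕ → Set X, (∀ n, IsOpen (U n)) → A ⊆ ⋃ n, U n →
    ∃ F : Finset ℕ, A ⊆ ⋃ n ∈ F, U n

/-- A topological space is pseudocompact if every continuous real-valued function on it
is bounded. -/
def Pseudocompact (X : Type*) [TopologicalSpace X] : Prop :=
  ∀ f : X → ℝ, Continuous f → ∃ M : ℝ, ∀ x, |f x| ≤ M

lemma exists_mapClusterPt' {X : Type*} [TopologicalSpace X]
    (hcc : CountablyCompactSpace' X) (u : ℕ → X) : ∃ y, MapClusterPt y atTop u := by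
  have key : ∃ y, ∀ k, y ∈ closure {s | ∃ n, k ≤ n ∧ u n = s} := by
    by_contra h
    push_neg at h
    obtain ⟨F, hF⟩ := hcc (fun k => (closure {s | ∃ n, k ≤ n ∧ u n = s})ᶜ)
      (fun k => isClosed_closure.isOpen_compl)
      (by
        ext y
        simp only [Set.mem_iUnion, Set.mem_compl_iff, Set.mem_univ, iff_true]
        exact h y)
    have hm : u (F.sup id) ∈ ⋃ k ∈ F, (closure {s | ∃ n, k ≤ n ∧ u n = s})ᶜ := by
      rw [hF]; trivial
    simp only [Set.mem_iUnion, Set.mem_compl_iff] at hm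
    obtain ⟨k, hkF, hk⟩ := hm
    exact hk (subset_closure ⟨F.sup id, Finset.le_sup (f := id) hkF, rfl⟩)
  obtain ⟨y, hy⟩ := key
  refine ⟨y, ?_⟩
  rw [mapClusterPt_iff_frequently]
  intro s hs
  rw [frequently_atTop]
  intro k
  obtain ⟨z, hz1, n, hn, rfl⟩ := mem_closure_iff_nhds.mp (hy k) s hs
  exact ⟨n, hn, hz1⟩

theorem stmt10 [Semigroup S] [TopologicalSpace S] [ContinuousMul S] [T2Space S]
    (hcc : CountablyCompactSpace' S) (e : S) (he : e * e = e) :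
    IsSeqClosed (Hgrp S e) := by
  intro u x hu hux
  simp only [Hgrp, Set.mem_setOf_eq] at hu ⊢
  choose v h1 h2 h3 h4 h5 h6 using hu
  obtain ⟨y, hy⟩ := exists_mapClusterPt' hcc v
  obtain ⟨U, hUle, hUy⟩ := mapClusterPt_iff_ultrafilter.mp hy
  have hux' : Tendsto u (U : Filter ℕ) (𝓝 x) := hux.mono_left hUle
  refine ⟨y, ?_, ?_, ?_, ?_, ?_, ?_⟩
  · have t1 : Tendsto (fun n => u n * v n) U (𝓝 (x * y)) := hux'.mul hUy
    have t2 : Tendsto (fun n => u n * v n) U (𝓝 e) := by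
      simpa only [h1] using (tendsto_const_nhds : Tendsto (fun _ : ℕ => e) (U : Filter ℕ) (𝓝 e))
    exact tendsto_nhds_unique t1 t2
  · have t1 : Tendsto (fun n => v n * u n) U (𝓝 (y * x)) := hUy.mul hux'
    have t2 : Tendsto (fun n => v n * u n) U (𝓝 e) := by
      simpa only [h2] using (tendsto_const_nhds : Tendsto (fun _ : ℕ => e) (U : Filter ℕ) (𝓝 e))
    exact tendsto_nhds_unique t1 t2
  · have t1 : Tendsto (fun n => u n * e) atTop (𝓝 (x * e)) := hux.mul tendsto_const_nhds
    have t2 : Tendsto (fun n => u n * e) atTop (𝓝 x) := by simpa only [h3] using hux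
    exact tendsto_nhds_unique t1 t2
  · have t1 : Tendsto (fun n => e * u n) atTop (𝓝 (e * x)) := tendsto_const_nhds.mul hux
    have t2 : Tendsto (fun n => e * u n) atTop (𝓝 x) := by simpa only [h4] using hux
    exact tendsto_nhds_unique t1 t2
  · have t1 : Tendsto (fun n => v n * e) U (𝓝 (y * e)) := hUy.mul tendsto_const_nhds
    have t2 : Tendsto (fun n => v n * e) U (𝓝 y) := by simpa only [h5] using hUy
    exact tendsto_nhds_unique t1 t2
  · have t1 : Tendsto (fun n => e * v n) U (𝓝 (e * y)) := tendsto_const_nhds.mul hUy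
    have t2 : Tendsto (fun n => e * v n) U (𝓝 y) := by simpa only [h6] using hUy
    exact tendsto_nhds_unique t1 t2
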